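/- (The eleventh, cubic integral establishing maximal superintegrability.) For every solution of the four-body system, with U₁ = (1/√2)(r₄ − r₂) = (U₁ₓ, U₁_y), P₁ = (1/√2)(p₄ − p₂) = (P₁ₓ, P₁_y), U₃ = ½((r₂+r₄) − (r₁+r₃)) = (U₃ₓ, U₃_y), and P₃ = ½((p₂+p₄) − (p₁+p₃)) = (P₃ₓ, P₃_y), the cubic quantity 𝓘(t) = P₁ₓ(t)² P₃_y(t) + 4m²ω² U₁ₓ(t) U₃_y(t) P₁ₓ(t) − m²ω² U₁ₓ(t)² P₃_y(t) is constant: 𝓘(t) = 𝓘(0) for all t ∈ ℝ. -/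

import Mathlib

noncomputable section

/-- The Euclidean plane. -/
abbrev Plane : Type := EuclideanSpace ℝ (Fin 2)

/-- A solution of the planar four-body system with pairwise quadratic potential
`V = (mω²/4)(2‖r₁−r₂‖² + 2‖r₂−r₃‖² + 2‖r₃−r₄‖² + 2‖r₁−r₄‖² − ‖r₁−r₃‖² − ‖r₂−r₄‖²)`:
four twice differentiable curves satisfying Newton's equations
`rᵢ'' = −ω²((rᵢ − r_{i+1}) + (rᵢ − r_{i−1}) − ½(rᵢ − r_{i+2}))` (indices mod 4). -/
def IsFourBodySolution (ω : ℝ) (r₁ r₂ r₃ r₄ : ℝ → Plane) : Prop :=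
  (Differentiable ℝ r₁ ∧ Differentiable ℝ (deriv r₁)) ∧
  (Differentiable ℝ r₂ ∧ Differentiable ℝ (deriv r₂)) ∧
  (Differentiable ℝ r₃ ∧ Differentiable ℝ (deriv r₃)) ∧
  (Differentiable ℝ r₄ ∧ Differentiable ℝ (deriv r₄)) ∧
  (∀ t : ℝ, deriv (deriv r₁) t =
    (-(ω ^ 2)) • ((r₁ t - r₂ t) + (r₁ t - r₄ t) - (1 / 2 : ℝ) • (r₁ t - r₃ t))) ∧
  (∀ t : ℝ, deriv (deriv r₂) t =
    (-(ω ^ 2)) • ((r₂ t - r₃ t) + (r₂ t - r₁ t) - (1 / 2 : ℝ) • (r₂ t - r₄ t))) ∧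
  (∀ t : ℝ, deriv (deriv r₃) t =
    (-(ω ^ 2)) • ((r₃ t - r₄ t) + (r₃ t - r₂ t) - (1 / 2 : ℝ) • (r₃ t - r₁ t))) ∧
  (∀ t : ℝ, deriv (deriv r₄) t =
    (-(ω ^ 2)) • ((r₄ t - r₁ t) + (r₄ t - r₃ t) - (1 / 2 : ℝ) • (r₄ t - r₂ t)))

/-- Normal-mode coordinate `U₃ = ½((r₂+r₄) − (r₁+r₃))`. -/
def U3 (r₁ r₂ r₃ r₄ : ℝ → Plane) (t : ℝ) : Plane :=
  (1 / 2 : ℝ) • ((r₂ t + r₄ t) - (r₁ t + r₃ t))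

/-- Normal-mode momentum `P₃ = ½((p₂+p₄) − (p₁+p₃))`, where `pᵢ = m rᵢ'`. -/
def P3 (m : ℝ) (r₁ r₂ r₃ r₄ : ℝ → Plane) (t : ℝ) : Plane :=
  (1 / 2 : ℝ) • ((m • deriv r₂ t + m • deriv r₄ t) - (m • deriv r₁ t + m • deriv r₃ t))

/-- Normal-mode coordinate `U₁ = (1/√2)(r₄ − r₂)`. -/
def U1 (r₂ r₄ : ℝ → Plane) (t : ℝ) : Plane :=
  (1 / Real.sqrt 2) • (r₄ t - r₂ t)

/-- Normal-mode momentum `P₁ = (1/√2)(p₄ − p₂)`, where `pᵢ = m rᵢ'`. -/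
def P1 (m : ℝ) (r₂ r₄ : ℝ → Plane) (t : ℝ) : Plane :=
  (1 / Real.sqrt 2) • (m • deriv r₄ t - m • deriv r₂ t)


theorem hasDerivAt_apply_fin2 {f : ℝ → Plane} {f' : Plane} {t : ℝ}
    (hf : HasDerivAt f f' t) (i : Fin 2) :
    HasDerivAt (fun s => f s i) (f' i) t := by
  have h := (EuclideanSpace.proj (𝕜 := ℝ) i).hasFDerivAt.comp_hasDerivAt t hf
  exact h

/-- The cubic quantity
`𝓘 = P₁ₓ² P₃_y + 4m²ω² U₁ₓ U₃_y P₁ₓ − m²ω² U₁ₓ² P₃_y` (the eleventh integral,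
establishing maximal superintegrability) is a constant of motion. -/
theorem eleventh_cubic_integral_conserved (m ω : ℝ) (hm : 0 < m) (hω : 0 < ω)
    (r₁ r₂ r₃ r₄ : ℝ → Plane)
    (hsol : IsFourBodySolution ω r₁ r₂ r₃ r₄) :
    ∀ t : ℝ,
      P1 m r₂ r₄ t 0 ^ 2 * P3 m r₁ r₂ r₃ r₄ t 1
        + 4 * m ^ 2 * ω ^ 2 * U1 r₂ r₄ t 0 * U3 r₁ r₂ r₃ r₄ t 1 * P1 m r₂ r₄ t 0
        - m ^ 2 * ω ^ 2 * U1 r₂ r₄ t 0 ^ 2 * P3 m r₁ r₂ r₃ r₄ t 1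
      = P1 m r₂ r₄ 0 0 ^ 2 * P3 m r₁ r₂ r₃ r₄ 0 1
        + 4 * m ^ 2 * ω ^ 2 * U1 r₂ r₄ 0 0 * U3 r₁ r₂ r₃ r₄ 0 1 * P1 m r₂ r₄ 0 0
        - m ^ 2 * ω ^ 2 * U1 r₂ r₄ 0 0 ^ 2 * P3 m r₁ r₂ r₃ r₄ 0 1  := by
  obtain ⟨⟨h1d, h1d'⟩, ⟨h2d, h2d'⟩, ⟨h3d, h3d'⟩, ⟨h4d, h4d'⟩, e1, e2, e3, e4⟩ := hsol
  have key : ∀ t : ℝ, HasDerivAt (fun s : ℝ =>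
      P1 m r₂ r₄ s 0 ^ 2 * P3 m r₁ r₂ r₃ r₄ s 1
        + 4 * m ^ 2 * ω ^ 2 * U1 r₂ r₄ s 0 * U3 r₁ r₂ r₃ r₄ s 1 * P1 m r₂ r₄ s 0
        - m ^ 2 * ω ^ 2 * U1 r₂ r₄ s 0 ^ 2 * P3 m r₁ r₂ r₃ r₄ s 1) 0 t := by
    intro t
    have d1 := (h1d t).hasDerivAt
    have d2 := (h2d t).hasDerivAt
    have d3 := (h3d t).hasDerivAt
    have d4 := (h4d t).hasDerivAt
    have dd1 := (h1d' t).hasDerivAt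
    have dd2 := (h2d' t).hasDerivAt
    have dd3 := (h3d' t).hasDerivAt
    have dd4 := (h4d' t).hasDerivAt
    -- derivative of U1 x-component
    have ha : HasDerivAt (fun s => U1 r₂ r₄ s 0)
        ((1 / Real.sqrt 2) * (deriv r₄ t 0 - deriv r₂ t 0)) t := by
      have h := hasDerivAt_apply_fin2 ((d4.sub d2).const_smul (1 / Real.sqrt 2)) 0
      simpa [U1, PiLp.smul_apply, PiLp.sub_apply, smul_eq_mul] using h
    -- derivative of U3 y-component
    have hb : HasDerivAt (fun s => U3 r₁ r₂ r₃ r₄ s 1)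
        ((1 / 2 : ℝ) * ((deriv r₂ t 1 + deriv r₄ t 1) - (deriv r₁ t 1 + deriv r₃ t 1))) t := by
      have h := hasDerivAt_apply_fin2
        (((d2.add d4).sub (d1.add d3)).const_smul (1 / 2 : ℝ)) 1
      simpa [U3, PiLp.smul_apply, PiLp.sub_apply, PiLp.add_apply, smul_eq_mul] using h
    -- derivative of P1 x-component
    have hA : HasDerivAt (fun s => P1 m r₂ r₄ s 0)
        (-(m * ω ^ 2) * U1 r₂ r₄ t 0) t := by
      have h := hasDerivAt_apply_fin2
        (((dd4.const_smul m).sub (dd2.const_smul m)).const_smul (1 / Real.sqrt 2)) 0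
      rw [e2 t, e4 t] at h
      have h' : HasDerivAt (fun s => P1 m r₂ r₄ s 0)
          (((1 / Real.sqrt 2) •
            (m • ((-(ω ^ 2)) • ((r₄ t - r₁ t) + (r₄ t - r₃ t) - (1 / 2 : ℝ) • (r₄ t - r₂ t)))
              - m • ((-(ω ^ 2)) • ((r₂ t - r₃ t) + (r₂ t - r₁ t) - (1 / 2 : ℝ) • (r₂ t - r₄ t))))) 0) t := h
      convert h' using 1
      simp [U1, PiLp.smul_apply, PiLp.sub_apply, PiLp.add_apply, smul_eq_mul]
      ring
    -- derivative of P3 y-component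
    have hB : HasDerivAt (fun s => P3 m r₁ r₂ r₃ r₄ s 1)
        (-(4 * m * ω ^ 2) * U3 r₁ r₂ r₃ r₄ t 1) t := by
      have h := hasDerivAt_apply_fin2
        ((((dd2.const_smul m).add (dd4.const_smul m)).sub
          ((dd1.const_smul m).add (dd3.const_smul m))).const_smul (1 / 2 : ℝ)) 1
      rw [e1 t, e2 t, e3 t, e4 t] at h
      have h' : HasDerivAt (fun s => P3 m r₁ r₂ r₃ r₄ s 1)
          (((1 / 2 : ℝ) •
            ((m • ((-(ω ^ 2)) • ((r₂ t - r₃ t) + (r₂ t - r₁ t) - (1 / 2 : ℝ) • (r₂ t - r₄ t)))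
              + m • ((-(ω ^ 2)) • ((r₄ t - r₁ t) + (r₄ t - r₃ t) - (1 / 2 : ℝ) • (r₄ t - r₂ t))))
             - (m • ((-(ω ^ 2)) • ((r₁ t - r₂ t) + (r₁ t - r₄ t) - (1 / 2 : ℝ) • (r₁ t - r₃ t)))
              + m • ((-(ω ^ 2)) • ((r₃ t - r₄ t) + (r₃ t - r₂ t) - (1 / 2 : ℝ) • (r₃ t - r₁ t)))))) 1) t := h
      convert h' using 1
      simp [U3, PiLp.smul_apply, PiLp.sub_apply, PiLp.add_apply, smul_eq_mul]
      ring
    -- algebraic relations between momenta and coordinate derivatives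
    have hAa : P1 m r₂ r₄ t 0 = m * ((1 / Real.sqrt 2) * (deriv r₄ t 0 - deriv r₂ t 0)) := by
      simp [P1, PiLp.smul_apply, PiLp.sub_apply, smul_eq_mul]
      ring
    have hBb : P3 m r₁ r₂ r₃ r₄ t 1
        = m * ((1 / 2 : ℝ) * ((deriv r₂ t 1 + deriv r₄ t 1) - (deriv r₁ t 1 + deriv r₃ t 1))) := by
      simp [P3, PiLp.smul_apply, PiLp.sub_apply, PiLp.add_apply, smul_eq_mul]
      ring
    have hcomb := (((hA.pow 2).mul hB).add
      ((((ha.const_mul (4 * m ^ 2 * ω ^ 2)).mul hb).mul hA))).sub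
      (((ha.pow 2).const_mul (m ^ 2 * ω ^ 2)).mul hB)
    convert hcomb using 1
    · rfl
    · rfl
    · rfl
    simp only [Pi.mul_apply, Pi.pow_apply]
    rw [hAa, hBb]
    ring
  intro t
  exact is_const_of_deriv_eq_zero (fun s => (key s).differentiableAt)
    (fun s => (key s).deriv) t 0
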